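/- The determinant binary cubic of the pair (A₀, B'_f), where B'_f = [[f4, f2/6, f3/2],[f2/6, f0, f1/2],[f3/2, f1/2, 2f2/3]], equals −x³ + (I/3)·x y² − (J/27)·y³, where I = 12 f0 f4 − 3 f1 f3 + f2² and J = 72 f0 f2 f4 − 2 f2³ − 27 f0 f3² − 27 f4 f1² + 9 f1 f2 f3. -/
import Mathlib


open Matrix

/-- The matrix `A₀ = [[0, −1/2, 0], [−1/2, 0, 0], [0, 0, 1]]`. -/
noncomputable def A0 : Matrix (Fin 3) (Fin 3) ℚ :=
  !![0, -1/2, 0; -1/2, 0, 0; 0, 0, 1]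

/-- The twisted matrix `B'_f = [[f4, f2/6, f3/2], [f2/6, f0, f1/2], [f3/2, f1/2, 2f2/3]]` of the
binary quartic form `f = f0 x⁴ + f1 x³y + f2 x²y² + f3 xy³ + f4 y⁴`. -/
noncomputable def Bf' (f0 f1 f2 f3 f4 : ℤ) : Matrix (Fin 3) (Fin 3) ℚ :=
  !![(f4:ℚ), (f2:ℚ)/6, (f3:ℚ)/2;
     (f2:ℚ)/6, (f0:ℚ), (f1:ℚ)/2;
     (f3:ℚ)/2, (f1:ℚ)/2, 2*(f2:ℚ)/3]

/-- The determinant binary cubic of the pair `(A₀, B'_f)` equals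
`−x³ + (I/3)·x y² − (J/27)·y³`, where `I = 12 f0 f4 − 3 f1 f3 + f2²` and
`J = 72 f0 f2 f4 − 2 f2³ − 27 f0 f3² − 27 f4 f1² + 9 f1 f2 f3`. -/
theorem det_cubic_of_canonical_pair (f0 f1 f2 f3 f4 : ℤ) :
    let I : ℚ := 12*(f0:ℚ)*(f4:ℚ) - 3*(f1:ℚ)*(f3:ℚ) + (f2:ℚ)^2
    let J : ℚ := 72*(f0:ℚ)*(f2:ℚ)*(f4:ℚ) - 2*(f2:ℚ)^3 - 27*(f0:ℚ)*(f3:ℚ)^2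
      - 27*(f4:ℚ)*(f1:ℚ)^2 + 9*(f1:ℚ)*(f2:ℚ)*(f3:ℚ)
    ∀ x y : ℚ,
      4 * (x • A0 - y • Bf' f0 f1 f2 f3 f4).det
        = -x^3 + (I/3) * x * y^2 - (J/27) * y^3 := by
  intro I J x y
  simp only [A0, Bf', Matrix.det_fin_three, Matrix.sub_apply, Matrix.smul_apply, smul_eq_mul,
    Matrix.of_apply, Matrix.cons_val', Matrix.cons_val_zero, Matrix.cons_val_one, Matrix.head_cons,
    Matrix.empty_val', Matrix.cons_val_fin_one, Matrix.head_fin_const,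
    Matrix.cons_val_two, Matrix.tail_cons]
  ring
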